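/- Let K ⊆ V be a nonempty cone and let 𝒻 ⊆ F̂(K) be any family. Then co(⋃_{F ∈ 𝒻}(K ∩ F)) = co(K ∩ co(⋃_{F ∈ 𝒻} F)) = co(⋃_{F ∈ 𝒻} F); in particular, co(⋃_{F ∈ 𝒻} F) ∈ F̂(K). -/
import Mathlib


open RealInnerProductSpace Pointwise

variable {V : Type*} [NormedAddCommGroup V] [InnerProductSpace ℝ V]

/-- A (not necessarily convex or closed) cone: closed under nonnegative scaling. -/
def IsCone (C : Set V) : Prop := ∀ X ∈ C, ∀ l : ℝ, 0 ≤ l → l • X ∈ C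

/-- `F̂(K)`: the family of all convex cones `J ⊆ co K` with `co (K ∩ J) = J`. -/
def Fhat (K : Set V) : Set (Set V) :=
  {J | Convex ℝ J ∧ IsCone J ∧ J ⊆ convexHull ℝ K ∧ convexHull ℝ (K ∩ J) = J}

/-- Theorem 3.1 (v): for every family `𝓕 ⊆ F̂(K)`,
`co (⋃_{F ∈ 𝓕} (K ∩ F)) = co (K ∩ co (⋃ 𝓕)) = co (⋃ 𝓕)`;
in particular `co (⋃ 𝓕) ∈ F̂(K)`. -/
theorem stmt_11 [FiniteDimensional ℝ V] (K : Set V)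
    (hKne : K.Nonempty) (hKcone : IsCone K)
    (𝓕 : Set (Set V)) (h𝓕 : 𝓕 ⊆ Fhat K) :
    convexHull ℝ (⋃ F ∈ 𝓕, K ∩ F) = convexHull ℝ (K ∩ convexHull ℝ (⋃₀ 𝓕)) ∧
    convexHull ℝ (K ∩ convexHull ℝ (⋃₀ 𝓕)) = convexHull ℝ (⋃₀ 𝓕) ∧
    convexHull ℝ (⋃₀ 𝓕) ∈ Fhat K := by
  set U : Set V := ⋃₀ 𝓕 with hU
  set A : Set V := ⋃ F ∈ 𝓕, K ∩ F with hA
  -- A ⊆ U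
  have hAU : A ⊆ U := by
    refine Set.iUnion₂_subset fun F hF => ?_
    exact Set.inter_subset_right.trans (Set.subset_sUnion_of_mem hF)
  -- U ⊆ co A
  have hUA : U ⊆ convexHull ℝ A := by
    rintro x ⟨F, hF, hx⟩
    have hFeq : convexHull ℝ (K ∩ F) = F := (h𝓕 hF).2.2.2
    have : x ∈ convexHull ℝ (K ∩ F) := by rw [hFeq]; exact hx
    exact convexHull_mono (Set.subset_iUnion₂ (s := fun F _ => K ∩ F) F hF) this
  -- co A = co U
  have eqAU : convexHull ℝ A = convexHull ℝ U :=
    le_antisymm (convexHull_mono hAU) (convexHull_min hUA (convex_convexHull ℝ A))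
  -- A ⊆ K ∩ co U
  have hA2 : A ⊆ K ∩ convexHull ℝ U := by
    refine Set.subset_inter (Set.iUnion₂_subset fun F hF => Set.inter_subset_left) ?_
    exact hAU.trans (subset_convexHull ℝ U)
  have h1 : convexHull ℝ A ⊆ convexHull ℝ (K ∩ convexHull ℝ U) := convexHull_mono hA2
  have h2 : convexHull ℝ (K ∩ convexHull ℝ U) ⊆ convexHull ℝ U := by
    refine convexHull_min ?_ (convex_convexHull ℝ U)
    exact Set.inter_subset_right
  have eq2 : convexHull ℝ (K ∩ convexHull ℝ U) = convexHull ℝ U :=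
    le_antisymm h2 (eqAU ▸ h1)
  have eq1 : convexHull ℝ A = convexHull ℝ (K ∩ convexHull ℝ U) := eqAU.trans eq2.symm
  refine ⟨eq1, eq2, convex_convexHull ℝ U, ?_, ?_, eq2⟩
  · -- cone
    intro x hx l hl
    have hUcone : IsCone U := by
      rintro y ⟨F, hF, hy⟩ m hm
      exact ⟨F, hF, (h𝓕 hF).2.1 y hy m hm⟩
    have : l • x ∈ l • convexHull ℝ U := ⟨x, hx, rfl⟩
    rw [← convexHull_smul] at this
    refine convexHull_mono ?_ this
    rintro z ⟨y, hy, rfl⟩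
    exact hUcone y hy l hl
  · -- co U ⊆ co K
    refine convexHull_min ?_ (convex_convexHull ℝ K)
    rintro x ⟨F, hF, hx⟩
    exact (h𝓕 hF).2.2.1 hx
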